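/- Define polynomials p_n by p_0(x) = 1 and p_{n+1}(x) = x^2 * p_n''(x) + x*(1 - 2x) * p_n'(x) - x * p_n(x). Then for all n >= 1, p_n'(x) = - sum over k from 0 to n-1 of binomial(2n, 2k) * p_k(x). -/

import Mathlib

open Polynomial

/-- The Sheffer-type polynomial sequence `p₀ = 1`,
`p_{n+1}(x) = x² pₙ″(x) + x(1 - 2x) pₙ′(x) - x pₙ(x)`. -/
noncomputable def KLpoly : ℕ → Polynomial ℤ
  | 0 => 1
  | n + 1 =>
      X ^ 2 * derivative (derivative (KLpoly n)) +
        X * (1 - 2 * X) * derivative (KLpoly n) - X * KLpoly n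

open Finset


lemma split_even (f : ℕ → ℤ) (d : ℕ) :
    ∑ i ∈ range (2*d+1), f i = (∑ i ∈ range (d+1), f (2*i)) + ∑ i ∈ range d, f (2*i+1) := by
  induction d with
  | zero => simp
  | succ d ih =>
      have h1 : 2*(d+1)+1 = (2*d+1) + 1 + 1 := by ring
      rw [h1, sum_range_succ, sum_range_succ, ih, sum_range_succ (fun i => f (2*i)) (d+1),
        sum_range_succ (fun i => f (2*i+1))]
      have h2 : 2*(d+1) = 2*d+1+1 := by ring
      rw [h2]
      abel

lemma split_odd (f : ℕ → ℤ) (d : ℕ) :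
    ∑ i ∈ range (2*d+2), f i = (∑ i ∈ range (d+1), f (2*i)) + ∑ i ∈ range (d+1), f (2*i+1) := by
  have h : 2*d+2 = (2*d+1)+1 := by ring
  rw [h, sum_range_succ, split_even, sum_range_succ (fun i => f (2*i+1))]
  abel

-- even/odd sums of binomials agree
lemma even_eq_odd_even (e : ℕ) :
    (∑ i ∈ range (e+2), ((2*e+2).choose (2*i) : ℤ)) =
      ∑ i ∈ range (e+1), ((2*e+2).choose (2*i+1) : ℤ) := by
  have h0 := Int.alternating_sum_range_choose_of_ne (n := 2*e+2) (by omega)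
  have h1 : (2*e+2) + 1 = 2*(e+1)+1 := by ring
  rw [h1, split_even (fun m => ((-1)^m * (2*e+2).choose m : ℤ)) (e+1)] at h0
  have h2 : ∀ i : ℕ, ((-1 : ℤ))^(2*i) = 1 := fun i => by
    rw [pow_mul]; norm_num
  have h3 : ∀ i : ℕ, ((-1 : ℤ))^(2*i+1) = -1 := fun i => by
    rw [pow_succ, pow_mul]; norm_num
  simp only [h2, h3, one_mul, neg_one_mul] at h0
  rw [sum_neg_distrib] at h0
  linarith [h0]

lemma even_eq_odd_odd (d : ℕ) :
    (∑ i ∈ range (d+1), ((2*d+1).choose (2*i) : ℤ)) =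
      ∑ i ∈ range (d+1), ((2*d+1).choose (2*i+1) : ℤ) := by
  have h0 := Int.alternating_sum_range_choose_of_ne (n := 2*d+1) (by omega)
  have h1 : (2*d+1) + 1 = 2*d+2 := by ring
  rw [h1, split_odd (fun m => ((-1)^m * (2*d+1).choose m : ℤ)) d] at h0
  have h2 : ∀ i : ℕ, ((-1 : ℤ))^(2*i) = 1 := fun i => by
    rw [pow_mul]; norm_num
  have h3 : ∀ i : ℕ, ((-1 : ℤ))^(2*i+1) = -1 := fun i => by
    rw [pow_succ, pow_mul]; norm_num
  simp only [h2, h3, one_mul, neg_one_mul] at h0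
  rw [sum_neg_distrib] at h0
  linarith [h0]

lemma L1 (e : ℕ) :
    (∑ i ∈ range (e+1), ((2*e+2).choose (2*i+1) : ℤ)) =
      2 + ∑ i ∈ range e, ((2*e+2).choose (2*i+2) : ℤ) := by
  rw [← even_eq_odd_even, sum_range_succ' (fun i => ((2*e+2).choose (2*i) : ℤ)) (e+1),
    sum_range_succ (fun i => ((2*e+2).choose (2*(i+1)) : ℤ)) e]
  have h1 : (2*e+2).choose (2*(e+1)) = 1 := by
    have : 2*(e+1) = 2*e+2 := by ring
    rw [this, Nat.choose_self]
  have h2 : ∀ i : ℕ, 2*(i+1) = 2*i+2 := fun i => by ring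
  simp only [h2] at h1 ⊢
  rw [h1]
  simp [Nat.choose_zero_right]
  ring

lemma L2 (d : ℕ) :
    (∑ i ∈ range d, ((2*d+1).choose (2*i+1) : ℤ)) =
      ∑ i ∈ range d, ((2*d+1).choose (2*i+2) : ℤ) := by
  have h := even_eq_odd_odd d
  rw [sum_range_succ' (fun i => ((2*d+1).choose (2*i) : ℤ)) d,
    sum_range_succ (fun i => ((2*d+1).choose (2*i+1) : ℤ)) d] at h
  have h1 : (2*d+1).choose (2*d+1) = 1 := Nat.choose_self _
  have h2 : ∀ i : ℕ, 2*(i+1) = 2*i+2 := fun i => by ring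
  simp only [h2, h1, mul_zero, Nat.choose_zero_right, Nat.cast_one] at h
  linarith

lemma S1 {j n : ℕ} (hj : j < n) :
    (∑ k ∈ Ico j n, ((2*n).choose (2*k+1) * (2*k+1).choose (2*j) : ℤ)) =
      2 * ((2*n).choose (2*j) : ℤ) +
        ∑ k ∈ Ico (j+1) n, ((2*n).choose (2*k) * (2*k).choose (2*j) : ℤ) := by
  obtain ⟨e, rfl⟩ : ∃ e, n = j + (e+1) := ⟨n - j - 1, by omega⟩
  rw [sum_Ico_eq_sum_range, sum_Ico_eq_sum_range]
  have hd1 : j + (e+1) - j = e + 1 := by omega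
  have hd2 : j + (e+1) - (j+1) = e := by omega
  rw [hd1, hd2]
  have hL : ∀ i ∈ range (e+1),
      ((2*(j+(e+1))).choose (2*(j+i)+1) * (2*(j+i)+1).choose (2*j) : ℤ) =
        ((2*(j+(e+1))).choose (2*j) : ℤ) * ((2*e+2).choose (2*i+1) : ℤ) := by
    intro i hi
    rw [mem_range] at hi
    have h := Nat.choose_mul (n := 2*(j+(e+1))) (k := 2*(j+i)+1) (s := 2*j)
      (by omega)
    have h1 : 2*(j+(e+1)) - 2*j = 2*e+2 := by omega
    have h2 : 2*(j+i)+1 - 2*j = 2*i+1 := by omega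
    rw [h1, h2] at h
    exact_mod_cast congrArg (Nat.cast : ℕ → ℤ) h
  have hR : ∀ i ∈ range e,
      ((2*(j+(e+1))).choose (2*(j+1+i)) * (2*(j+1+i)).choose (2*j) : ℤ) =
        ((2*(j+(e+1))).choose (2*j) : ℤ) * ((2*e+2).choose (2*i+2) : ℤ) := by
    intro i hi
    rw [mem_range] at hi
    have h := Nat.choose_mul (n := 2*(j+(e+1))) (k := 2*(j+1+i)) (s := 2*j)
      (by omega)
    have h1 : 2*(j+(e+1)) - 2*j = 2*e+2 := by omega
    have h2 : 2*(j+1+i) - 2*j = 2*i+2 := by omega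
    rw [h1, h2] at h
    exact_mod_cast congrArg (Nat.cast : ℕ → ℤ) h
  rw [sum_congr rfl hL, sum_congr rfl hR, ← mul_sum, ← mul_sum, L1 e]
  ring

lemma S2 {j m : ℕ} (hj : j ≤ m) :
    (∑ k ∈ Ico (j+1) (m+1), ((2*m+1).choose (2*k) * (2*k).choose (2*j) : ℤ)) =
      ∑ k ∈ Ico j m, ((2*m+1).choose (2*k+1) * (2*k+1).choose (2*j) : ℤ) := by
  obtain ⟨d, rfl⟩ : ∃ d, m = j + d := ⟨m - j, by omega⟩
  rw [sum_Ico_eq_sum_range, sum_Ico_eq_sum_range]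
  have hd1 : j + d + 1 - (j+1) = d := by omega
  have hd2 : j + d - j = d := by omega
  rw [hd1, hd2]
  have hL : ∀ i ∈ range d,
      ((2*(j+d)+1).choose (2*(j+1+i)) * (2*(j+1+i)).choose (2*j) : ℤ) =
        ((2*(j+d)+1).choose (2*j) : ℤ) * ((2*d+1).choose (2*i+2) : ℤ) := by
    intro i hi
    rw [mem_range] at hi
    have h := Nat.choose_mul (n := 2*(j+d)+1) (k := 2*(j+1+i)) (s := 2*j)
      (by omega)
    have h1 : 2*(j+d)+1 - 2*j = 2*d+1 := by omega
    have h2 : 2*(j+1+i) - 2*j = 2*i+2 := by omega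
    rw [h1, h2] at h
    exact_mod_cast congrArg (Nat.cast : ℕ → ℤ) h
  have hR : ∀ i ∈ range d,
      ((2*(j+d)+1).choose (2*(j+i)+1) * (2*(j+i)+1).choose (2*j) : ℤ) =
        ((2*(j+d)+1).choose (2*j) : ℤ) * ((2*d+1).choose (2*i+1) : ℤ) := by
    intro i hi
    rw [mem_range] at hi
    have h := Nat.choose_mul (n := 2*(j+d)+1) (k := 2*(j+i)+1) (s := 2*j)
      (by omega)
    have h1 : 2*(j+d)+1 - 2*j = 2*d+1 := by omega
    have h2 : 2*(j+i)+1 - 2*j = 2*i+1 := by omega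
    rw [h1, h2] at h
    exact_mod_cast congrArg (Nat.cast : ℕ → ℤ) h
  rw [sum_congr rfl hL, sum_congr rfl hR, ← mul_sum, ← mul_sum, L2 d]


lemma swap1 {M : Type*} [AddCommMonoid M] (n : ℕ) (f : ℕ → ℕ → M) :
    ∑ k ∈ range n, ∑ j ∈ range k, f k j = ∑ j ∈ range n, ∑ k ∈ Ico (j+1) n, f k j := by
  have h := Finset.sum_Ico_Ico_comm' 0 n (fun j k => f k j)
  simp only [Finset.range_eq_Ico]
  exact h.symm

lemma swap2 {M : Type*} [AddCommMonoid M] (n : ℕ) (f : ℕ → ℕ → M) :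
    ∑ k ∈ range n, ∑ j ∈ range (k+1), f k j = ∑ j ∈ range n, ∑ k ∈ Ico j n, f k j := by
  have h := Finset.sum_Ico_Ico_comm 0 n (fun j k => f k j)
  simp only [Finset.range_eq_Ico]
  exact h.symm

lemma merge (N n : ℕ) (g : ℕ → Polynomial ℤ) :
    ∑ k ∈ range (n+1), ((N+1).choose (2*k) : ℤ) • g k =
      (∑ k ∈ range (n+1), (N.choose (2*k) : ℤ) • g k) +
        ∑ k ∈ range n, (N.choose (2*k+1) : ℤ) • g (k+1) := by
  rw [sum_range_succ' (fun k => ((N+1).choose (2*k) : ℤ) • g k) n,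
    sum_range_succ' (fun k => ((N).choose (2*k) : ℤ) • g k) n]
  have hP : ∀ k : ℕ, ((N+1).choose (2*(k+1)) : ℤ) = (N.choose (2*k+1) : ℤ) + (N.choose (2*k+2) : ℤ) := by
    intro k
    have h2 : 2*(k+1) = (2*k+1)+1 := by ring
    rw [h2, Nat.choose_succ_succ]
    push_cast
    ring
  have : ∀ k ∈ range n, ((N+1).choose (2*(k+1)) : ℤ) • g (k+1) =
      (N.choose (2*k+1) : ℤ) • g (k+1) + (N.choose (2*(k+1)) : ℤ) • g (k+1) := by
    intro k _
    rw [hP k, add_smul]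
    have : 2*(k+1) = 2*k+2 := by ring
    rw [this]
  rw [sum_congr rfl this, sum_add_distrib]
  simp only [mul_zero, Nat.choose_zero_right]
  abel

theorem KL_main (n : ℕ) :
    (derivative (KLpoly n) = -∑ k ∈ range n, ((2*n).choose (2*k) : ℤ) • KLpoly k) ∧
    (KLpoly (n+1) = -(X * ∑ k ∈ range (n+1), ((2*n+1).choose (2*k) : ℤ) • KLpoly k)) := by
  induction n using Nat.strong_induction_on with
  | _ n IH =>
  have hA : derivative (KLpoly n) = -∑ k ∈ range n, ((2*n).choose (2*k) : ℤ) • KLpoly k := by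
    match n, IH with
    | 0, _ => simp [KLpoly]
    | (m+1), IH =>
      have hBm := (IH m (by omega)).2
      have hAk : ∀ k, k ≤ m → derivative (KLpoly k) =
          -∑ j ∈ range k, ((2*k).choose (2*j) : ℤ) • KLpoly j :=
        fun k hk => (IH k (by omega)).1
      have hBk : ∀ k, k < m → KLpoly (k+1) =
          -(X * ∑ j ∈ range (k+1), ((2*k+1).choose (2*j) : ℤ) • KLpoly j) :=
        fun k hk => (IH k (by omega)).2
      -- derivative of hBm
      have hDW : derivative (∑ k ∈ range (m+1), ((2*m+1).choose (2*k) : ℤ) • KLpoly k) =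
          -∑ k ∈ range (m+1), ((2*m+1).choose (2*k) : ℤ) •
              ∑ j ∈ range k, ((2*k).choose (2*j) : ℤ) • KLpoly j := by
        rw [derivative_sum, ← sum_neg_distrib]
        refine sum_congr rfl fun k hk => ?_
        rw [mem_range] at hk
        rw [derivative_smul, hAk k (by omega), smul_neg]
      have key2 : X * ∑ k ∈ range (m+1), ((2*m+1).choose (2*k) : ℤ) •
            ∑ j ∈ range k, ((2*k).choose (2*j) : ℤ) • KLpoly j =
          -∑ k ∈ range m, ((2*m+1).choose (2*k+1) : ℤ) • KLpoly (k+1) := by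
        have hdd : ∑ k ∈ range (m+1), ((2*m+1).choose (2*k) : ℤ) •
              ∑ j ∈ range k, ((2*k).choose (2*j) : ℤ) • KLpoly j =
            ∑ k ∈ range m, ((2*m+1).choose (2*k+1) : ℤ) •
              ∑ j ∈ range (k+1), ((2*k+1).choose (2*j) : ℤ) • KLpoly j := by
          simp only [smul_sum, smul_smul]
          rw [swap1 (m+1), swap2 m, sum_range_succ]
          simp only [Ico_self, sum_empty, add_zero]
          refine sum_congr rfl fun j hj => ?_
          rw [mem_range] at hj
          rw [← sum_smul, ← sum_smul, S2 (by omega : j ≤ m)]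
        rw [hdd, mul_sum, ← sum_neg_distrib]
        refine sum_congr rfl fun k hk => ?_
        rw [mem_range] at hk
        rw [mul_smul_comm, hBk k (by omega), smul_neg, neg_neg]
      have hD : derivative (KLpoly (m+1)) =
          -(∑ k ∈ range (m+1), ((2*m+1).choose (2*k) : ℤ) • KLpoly k) -
            ∑ k ∈ range m, ((2*m+1).choose (2*k+1) : ℤ) • KLpoly (k+1) := by
        rw [hBm, derivative_neg, derivative_mul, derivative_X, one_mul, hDW, mul_neg, key2]
        ring
      rw [hD]
      have h2 : 2*(m+1) = (2*m+1)+1 := by ring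
      rw [h2, merge (2*m+1) m KLpoly]
      ring
  refine ⟨hA, ?_⟩
  -- B step
  have hAk : ∀ k, k ≤ n → derivative (KLpoly k) =
      -∑ j ∈ range k, ((2*k).choose (2*j) : ℤ) • KLpoly j := by
    intro k hk
    rcases eq_or_lt_of_le hk with rfl | h
    · exact hA
    · exact (IH k h).1
  have hBk : ∀ k, k < n → KLpoly (k+1) =
      -(X * ∑ j ∈ range (k+1), ((2*k+1).choose (2*j) : ℤ) • KLpoly j) :=
    fun k hk => (IH k hk).2
  have hD2 : derivative (derivative (KLpoly n)) =
      ∑ k ∈ range n, ((2*n).choose (2*k) : ℤ) •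
        ∑ j ∈ range k, ((2*k).choose (2*j) : ℤ) • KLpoly j := by
    rw [hA, derivative_neg, derivative_sum, ← sum_neg_distrib]
    refine sum_congr rfl fun k hk => ?_
    rw [mem_range] at hk
    rw [derivative_smul, hAk k (by omega), smul_neg, neg_neg]
  have key : X^2 * (∑ k ∈ range n, ((2*n).choose (2*k) : ℤ) •
        ∑ j ∈ range k, ((2*k).choose (2*j) : ℤ) • KLpoly j) +
        X^2 * (∑ k ∈ range n, ((2*n).choose (2*k) : ℤ) • KLpoly k) +
        X^2 * (∑ k ∈ range n, ((2*n).choose (2*k) : ℤ) • KLpoly k) =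
      -(X * ∑ k ∈ range n, ((2*n).choose (2*k+1) : ℤ) • KLpoly (k+1)) := by
    have hSn2 : (∑ j ∈ range n, (2*((2*n).choose (2*j)) : ℤ) • KLpoly j) =
        (∑ k ∈ range n, ((2*n).choose (2*k) : ℤ) • KLpoly k) +
          ∑ k ∈ range n, ((2*n).choose (2*k) : ℤ) • KLpoly k := by
      rw [← sum_add_distrib]
      refine sum_congr rfl fun j _ => ?_
      rw [two_mul, add_smul]
    have h1 : (∑ k ∈ range n, ((2*n).choose (2*k) : ℤ) •
          ∑ j ∈ range k, ((2*k).choose (2*j) : ℤ) • KLpoly j)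
        + ∑ j ∈ range n, (2*((2*n).choose (2*j)) : ℤ) • KLpoly j
        = ∑ k ∈ range n, ((2*n).choose (2*k+1) : ℤ) •
            ∑ j ∈ range (k+1), ((2*k+1).choose (2*j) : ℤ) • KLpoly j := by
      simp only [smul_sum, smul_smul]
      rw [swap1 n, swap2 n, ← sum_add_distrib]
      refine sum_congr rfl fun j hj => ?_
      rw [mem_range] at hj
      rw [← sum_smul, ← sum_smul, ← add_smul]
      congr 1
      have := S1 hj
      linarith
    have e1 : X^2 * (∑ k ∈ range n, ((2*n).choose (2*k) : ℤ) •
          ∑ j ∈ range k, ((2*k).choose (2*j) : ℤ) • KLpoly j) +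
          X^2 * (∑ k ∈ range n, ((2*n).choose (2*k) : ℤ) • KLpoly k) +
          X^2 * (∑ k ∈ range n, ((2*n).choose (2*k) : ℤ) • KLpoly k) =
        X^2 * ((∑ k ∈ range n, ((2*n).choose (2*k) : ℤ) •
          ∑ j ∈ range k, ((2*k).choose (2*j) : ℤ) • KLpoly j)
            + ∑ j ∈ range n, (2*((2*n).choose (2*j)) : ℤ) • KLpoly j) := by
      rw [hSn2]
      ring
    rw [e1, h1, mul_sum, mul_sum, ← sum_neg_distrib]
    refine sum_congr rfl fun k hk => ?_
    rw [mem_range] at hk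
    rw [mul_smul_comm, mul_smul_comm, ← smul_neg]
    congr 1
    have hb := hBk k hk
    have : X^2 * (∑ j ∈ range (k+1), ((2*k+1).choose (2*j) : ℤ) • KLpoly j) =
        X * (X * ∑ j ∈ range (k+1), ((2*k+1).choose (2*j) : ℤ) • KLpoly j) := by ring
    rw [this, hb]
    ring
  have hstep : KLpoly (n+1) = X ^ 2 * derivative (derivative (KLpoly n)) +
      X * (1 - 2 * X) * derivative (KLpoly n) - X * KLpoly n := rfl
  rw [hstep, hD2, hA, merge (2*n) n KLpoly, sum_range_succ (fun k => ((2*n).choose (2*k) : ℤ) • KLpoly k) n]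
  have hself : ((2*n).choose (2*n) : ℤ) = 1 := by rw [Nat.choose_self]; norm_num
  rw [hself, one_smul]
  linear_combination key

theorem KLpoly_derivative_eq (n : ℕ) (hn : 1 ≤ n) :
    derivative (KLpoly n) =
      -∑ k ∈ Finset.range n, (Nat.choose (2 * n) (2 * k) : ℤ) • KLpoly k :=
  (KL_main n).1
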